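/- arXiv:0810.0966 — 3 statements merged into one kernel-verified Lean document; each statement's English description precedes it below -/
import Mathlib

section
/- If the interior subgraph of a graph with boundary is connected, then the first Dirichlet eigenvalue ν(G) is a simple eigenvalue of L₀ and there exists a corresponding eigenvector that is strictly positive at all interior vertices. -/
open Matrix BigOperators
open scoped Classical

/-- Weighted Laplacian of a weight function. -/
noncomputable def wLap {V : Type*} [Fintype V] [DecidableEq V] (w : V → V → ℝ) : Matrix V V ℝ :=
  Matrix.diagonal (fun v => ∑ u, w v u) - Matrix.of w

/-- The `k`-th smallest eigenvalue of a real matrix (0 if not Hermitian / out of range). -/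
noncomputable def kthEig {W : Type*} [Fintype W] [DecidableEq W] (A : Matrix W W ℝ) (k : ℕ) : ℝ :=
  if hA : A.IsHermitian then
    if h : k < Fintype.card W then
      (let g : Fin (Fintype.card W) → ℝ := hA.eigenvalues ∘ (Fintype.equivFin W).symm
       (g ∘ Tuple.sort g) ⟨k, h⟩)
    else 0
  else 0

noncomputable def minEig {W : Type*} [Fintype W] [DecidableEq W] (A : Matrix W W ℝ) : ℝ := kthEig A 0

/-- algebraic connectivity of a simple graph -/
noncomputable def algConn {V : Type*} [Fintype V] [DecidableEq V] (G : SimpleGraph V) : ℝ :=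
  kthEig (G.lapMatrix ℝ) 1

/-- Dirichlet matrix: weighted Laplacian restricted to an interior set `S`. -/
noncomputable def dirichletMatrix {V : Type*} [Fintype V] [DecidableEq V]
    (w : V → V → ℝ) (S : Set V) : Matrix S S ℝ :=
  (wLap w).submatrix Subtype.val Subtype.val

noncomputable def degSeq {V : Type*} [Fintype V] [DecidableEq V] (G : SimpleGraph V) : Multiset ℕ :=
  Finset.univ.val.map (fun v => G.degree v)


lemma minEig_spec {W : Type*} [Fintype W] [DecidableEq W] {A : Matrix W W ℝ}
    (hA : A.IsHermitian) (hW : 0 < Fintype.card W) :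
    (∃ i, hA.eigenvalues i = minEig A) ∧ ∀ j, minEig A ≤ hA.eigenvalues j := by
  have hval : minEig A =
      ((hA.eigenvalues ∘ (Fintype.equivFin W).symm) ∘
        Tuple.sort (hA.eigenvalues ∘ (Fintype.equivFin W).symm)) ⟨0, hW⟩ := by
    simp only [minEig, kthEig, dif_pos hA, dif_pos hW]
  set g : Fin (Fintype.card W) → ℝ := hA.eigenvalues ∘ (Fintype.equivFin W).symm with hg
  constructor
  · exact ⟨(Fintype.equivFin W).symm (Tuple.sort g ⟨0, hW⟩), by rw [hval]; rfl⟩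
  · intro j
    have h1 : hA.eigenvalues j =
        (g ∘ Tuple.sort g) ((Tuple.sort g).symm (Fintype.equivFin W j)) := by
      simp [hg, Function.comp]
    rw [hval, h1]
    exact Tuple.monotone_sort g (Fin.le_def.mpr (Nat.zero_le _))

lemma rayleigh_min {W : Type*} [Fintype W] [DecidableEq W] {A : Matrix W W ℝ}
    (hA : A.IsHermitian) {lam : ℝ} (hlam : ∀ j, lam ≤ hA.eigenvalues j)
    {x : W → ℝ} (hx : x ⬝ᵥ A *ᵥ x ≤ lam * (x ⬝ᵥ x)) : A *ᵥ x = lam • x := by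
  set b := hA.eigenvectorBasis with hb
  set μ := hA.eigenvalues with hμ
  let v : W → (W → ℝ) := fun i => (b i : EuclideanSpace ℝ W)
  let c : W → ℝ := fun i => (inner ℝ (b i) (WithLp.toLp 2 x : EuclideanSpace ℝ W) : ℝ)
  have hv : ∀ i, A *ᵥ v i = μ i • v i := fun i => hA.mulVec_eigenvectorBasis i
  have hrepr : ∑ i, c i • v i = x := by
    have := congrArg WithLp.ofLp (b.sum_repr' (WithLp.toLp 2 x)); simpa [v, c] using this
  have hc : ∀ i, v i ⬝ᵥ x = c i := by
    intro i
    simp [c, PiLp.inner_apply, dotProduct, RCLike.inner_apply]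
    exact Finset.sum_congr rfl fun j _ => mul_comm _ _
  have hdsum : ∀ (y : W → ℝ) (r : W → ℝ), y ⬝ᵥ (∑ i, r i • v i) = ∑ i, r i * (y ⬝ᵥ v i) := by
    intro y r
    simp only [dotProduct, Finset.sum_apply, Pi.smul_apply, smul_eq_mul, Finset.mul_sum]
    rw [Finset.sum_comm]
    exact Finset.sum_congr rfl fun i _ => Finset.sum_congr rfl fun j _ => by ring
  have hxv : ∀ i, x ⬝ᵥ v i = c i := fun i => (dotProduct_comm _ _).trans (hc i)
  have hAx : A *ᵥ x = ∑ i, (μ i * c i) • v i := by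
    calc A *ᵥ x = A *ᵥ ∑ i, c i • v i := by rw [hrepr]
    _ = ∑ i, A *ᵥ (c i • v i) := by
        rw [← A.mulVecLin_apply, map_sum]
        simp [Matrix.mulVecLin_apply, Matrix.mulVec_smul]
    _ = ∑ i, (μ i * c i) • v i := by
        refine Finset.sum_congr rfl fun i _ => ?_
        rw [Matrix.mulVec_smul, hv i, smul_smul, mul_comm]
  have hQx : x ⬝ᵥ A *ᵥ x = ∑ i, μ i * c i ^ 2 := by
    rw [hAx, hdsum]
    exact Finset.sum_congr rfl fun i _ => by rw [hxv i]; ring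
  have hxx : x ⬝ᵥ x = ∑ i, c i ^ 2 := by
    conv_lhs => rw [← hrepr]
    rw [hdsum]
    exact Finset.sum_congr rfl fun i _ => by rw [hrepr, hxv i]; ring
  have hnn : ∀ i ∈ Finset.univ, 0 ≤ (μ i - lam) * c i ^ 2 := fun i _ =>
    mul_nonneg (sub_nonneg.mpr (hlam i)) (sq_nonneg _)
  have hsum : ∑ i, (μ i - lam) * c i ^ 2 = 0 := by
    have h1 : ∑ i, (μ i - lam) * c i ^ 2 = (∑ i, μ i * c i ^ 2) - lam * ∑ i, c i ^ 2 := by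
      rw [Finset.mul_sum, ← Finset.sum_sub_distrib]
      exact Finset.sum_congr rfl fun i _ => by ring
    refine le_antisymm ?_ (Finset.sum_nonneg hnn)
    rw [h1, ← hQx, ← hxx]; linarith
  have hterm : ∀ i, (μ i - lam) * c i ^ 2 = 0 := fun i =>
    (Finset.sum_eq_zero_iff_of_nonneg hnn).mp hsum i (Finset.mem_univ i)
  rw [hAx]
  conv_rhs => rw [← hrepr]
  rw [Finset.smul_sum]
  refine Finset.sum_congr rfl fun i _ => ?_
  rcases mul_eq_zero.mp (hterm i) with h | h
  · have h2 : μ i = lam := by have := sub_eq_zero.mp h; linarith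
    rw [h2, smul_smul]
  · have h2 : c i = 0 := pow_eq_zero_iff (n := 2) (by norm_num) |>.mp h
    simp [h2]

section helpers
variable {V : Type*} [Fintype V] [DecidableEq V] (w : V → V → ℝ) (S : Set V)

lemma dm_apply (u v : S) :
    dirichletMatrix w S u v = (if (u : V) = (v : V) then ∑ t, w u t else 0) - w u v := by
  simp [dirichletMatrix, wLap, Matrix.diagonal, Matrix.sub_apply]

lemma dm_herm (hsym : ∀ u v, w u v = w v u) : (dirichletMatrix w S).IsHermitian := by
  unfold Matrix.IsHermitian
  ext u v
  simp only [Matrix.conjTranspose_apply, dm_apply, star_trivial, hsym (v : V) (u : V)]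
  by_cases h : (u : V) = (v : V)
  · simp [h, Finset.sum_congr rfl fun t _ => hsym (u : V) t]
  · simp [h, Ne.symm h]

lemma dm_mulVec (f : S → ℝ) (u : S) :
    (dirichletMatrix w S *ᵥ f) u = (∑ t, w u t) * f u - ∑ v : S, w u v * f v := by
  simp only [Matrix.mulVec, dotProduct, dm_apply, sub_mul, ite_mul, zero_mul,
    Finset.sum_sub_distrib]
  congr 1
  simp [Subtype.coe_inj]

lemma dm_quad (f : S → ℝ) : f ⬝ᵥ dirichletMatrix w S *ᵥ f
    = (∑ u : S, (∑ t, w u t) * f u ^ 2) - ∑ u : S, ∑ v : S, w u v * (f u * f v) := by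
  simp only [dotProduct, dm_mulVec]
  rw [← Finset.sum_sub_distrib]
  refine Finset.sum_congr rfl fun u _ => ?_
  rw [mul_sub, Finset.mul_sum]
  congr 1
  · ring
  · exact Finset.sum_congr rfl fun v _ => by ring

lemma dm_quad_abs_le (hnonneg : ∀ u v, 0 ≤ w u v) (f : S → ℝ) :
    (fun v => |f v|) ⬝ᵥ dirichletMatrix w S *ᵥ (fun v => |f v|) ≤ f ⬝ᵥ dirichletMatrix w S *ᵥ f := by
  rw [dm_quad, dm_quad]
  have h1 : ∑ u : S, (∑ t, w u t) * |f u| ^ 2 = ∑ u : S, (∑ t, w u t) * f u ^ 2 :=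
    Finset.sum_congr rfl fun u _ => by rw [sq_abs]
  rw [h1]
  refine sub_le_sub_left ?_ _
  refine Finset.sum_le_sum fun u _ => Finset.sum_le_sum fun v _ => ?_
  refine mul_le_mul_of_nonneg_left ?_ (hnonneg _ _)
  calc f u * f v ≤ |f u * f v| := le_abs_self _
  _ = |f u| * |f v| := abs_mul _ _

end helpers

/-- if the interior subgraph is connected, the first Dirichlet
eigenvalue is simple and has an eigenvector strictly positive on the interior. -/
theorem dirichlet_eig_simple_pos_eigenvector {V : Type*} [Fintype V] [DecidableEq V]
    (w : V → V → ℝ) (S : Set V) (hS : S.Nonempty)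
    (hsym : ∀ u v, w u v = w v u) (hnonneg : ∀ u v, 0 ≤ w u v)
    (hloop : ∀ v, w v v = 0)
    (hbd : ∀ u ∉ S, ∀ v ∉ S, w u v = 0)
    (hbe : ∃ u ∈ S, ∃ v ∉ S, 0 < w u v)
    (hconn : ((SimpleGraph.fromRel (fun u v => 0 < w u v)).induce S).Connected) :
    ∃ f : S → ℝ, (∀ v, 0 < f v) ∧
      (dirichletMatrix w S) *ᵥ f = minEig (dirichletMatrix w S) • f ∧
      ∀ g : S → ℝ, (dirichletMatrix w S) *ᵥ g = minEig (dirichletMatrix w S) • g →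
        ∃ c : ℝ, g = c • f := by
  classical
  set A := dirichletMatrix w S with hAdef
  have hA : A.IsHermitian := dm_herm w S hsym
  haveI : Nonempty ↥S := hS.to_subtype
  have hcard : 0 < Fintype.card ↥S := Fintype.card_pos
  obtain ⟨⟨i0, hi0⟩, hmin⟩ := minEig_spec hA hcard
  set lam := minEig A with hlamdef
  -- zero propagation along the interior graph
  have prop : ∀ h : ↥S → ℝ, (∀ v, 0 ≤ h v) → A *ᵥ h = lam • h →
      ∀ u : ↥S, h u = 0 → ∀ v : ↥S, h v = 0 := by
    intro h hpos heig u hu v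
    have step : ∀ a b : ↥S, 0 < w a.val b.val → h a = 0 → h b = 0 := by
      intro a b hw ha
      have h1 : (A *ᵥ h) a = 0 := by rw [heig]; simp [ha]
      have h2 : ∑ x : ↥S, w a.val x.val * h x = 0 := by
        have h3 := dm_mulVec w S h a
        rw [h1, ha, mul_zero] at h3
        linarith
      have h4 := (Finset.sum_eq_zero_iff_of_nonneg
        (fun x _ => mul_nonneg (hnonneg _ _) (hpos x))).mp h2 b (Finset.mem_univ b)
      rcases mul_eq_zero.mp h4 with h5 | h5
      · exact absurd h5 (ne_of_gt hw)
      · exact h5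
    suffices H : ∀ (a b : ↥S)
        (_ : ((SimpleGraph.fromRel (fun u v => 0 < w u v)).induce S).Walk a b),
        h a = 0 → h b = 0 by
      obtain ⟨p⟩ := hconn.preconnected u v
      exact H u v p hu
    intro a b p
    induction p with
    | nil => exact id
    | cons hadj q ih =>
      intro ha
      refine ih ?_
      rename_i a' c' _
      have hadj' : 0 < w a'.val c'.val := by
        simp only [SimpleGraph.comap_adj, SimpleGraph.fromRel_adj] at hadj
        rcases hadj.2 with h' | h'
        · exact h'
        · rw [hsym]; exact h'
      exact step _ _ hadj' ha
  -- first eigenvector and its absolute value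
  let f₀ : ↥S → ℝ := ⇑(hA.eigenvectorBasis i0)
  have hf₀ : A *ᵥ f₀ = lam • f₀ := by
    rw [show A *ᵥ f₀ = hA.eigenvalues i0 • f₀ from hA.mulVec_eigenvectorBasis i0, hi0]
  have hf₀ne : ∃ u, f₀ u ≠ 0 := by
    by_contra hcon
    push_neg at hcon
    exact hA.eigenvectorBasis.orthonormal.ne_zero i0 (PiLp.ext fun u => by simpa using hcon u)
  have habs : ∀ h : ↥S → ℝ, A *ᵥ h = lam • h →
      A *ᵥ (fun v => |h v|) = lam • (fun v => |h v|) := by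
    intro h heig
    refine rayleigh_min hA hmin ?_
    have e1 : h ⬝ᵥ A *ᵥ h = lam * (h ⬝ᵥ h) := by
      rw [heig, dotProduct_smul, smul_eq_mul]
    have e2 : (fun v => |h v|) ⬝ᵥ (fun v => |h v|) = h ⬝ᵥ h := by
      refine Finset.sum_congr rfl fun v _ => abs_mul_abs_self _
    calc (fun v => |h v|) ⬝ᵥ A *ᵥ (fun v => |h v|) ≤ h ⬝ᵥ A *ᵥ h := dm_quad_abs_le w S hnonneg h
    _ = lam * (h ⬝ᵥ h) := e1
    _ = lam * ((fun v => |h v|) ⬝ᵥ (fun v => |h v|)) := by rw [e2]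
  set f : ↥S → ℝ := fun v => |f₀ v| with hfdef
  have hfeig : A *ᵥ f = lam • f := habs f₀ hf₀
  have hfpos : ∀ v, 0 < f v := by
    intro v
    rcases (abs_nonneg (f₀ v)).lt_or_eq with hlt | heq
    · exact hlt
    · exfalso
      obtain ⟨u, hu⟩ := hf₀ne
      have := prop f (fun x => abs_nonneg _) hfeig v heq.symm u
      exact hu (abs_eq_zero.mp this)
  refine ⟨f, hfpos, hfeig, ?_⟩
  intro g hg
  obtain ⟨u₀⟩ := ‹Nonempty ↥S›
  refine ⟨g u₀ / f u₀, ?_⟩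
  set cc : ℝ := g u₀ / f u₀ with hccdef
  set h : ↥S → ℝ := fun v => g v - cc * f v with hhdef
  have hheig : A *ᵥ h = lam • h := by
    have e : h = g - cc • f := rfl
    rw [e, Matrix.mulVec_sub, Matrix.mulVec_smul, hg, hfeig]
    funext v
    simp [smul_eq_mul]
    ring
  have hhu₀ : h u₀ = 0 := by
    simp only [hhdef, hccdef]
    rw [div_mul_cancel₀ _ (ne_of_gt (hfpos u₀))]
    ring
  have hz : ∀ v, h v = 0 := by
    intro v
    have := prop (fun x => |h x|) (fun x => abs_nonneg _) (habs h hheig) u₀ (by simp [hhu₀]) v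
    exact abs_eq_zero.mp this
  funext v
  have hv := hz v
  simp only [hhdef, sub_eq_zero] at hv
  simpa [smul_eq_mul] using hv
end

section
/- Let T₀ be a tree with a single boundary vertex v₀ and let f be a nonnegative eigenvector of the first Dirichlet eigenvalue ν(T₀). Then along every simple path in T₀ starting at v₀, the values of f (with f(v₀)=0) are either strictly increasing or identically zero. -/
open Matrix BigOperators
open scoped Classical

/-- a nonnegative first Dirichlet eigenvector of a tree with the
single boundary vertex `v₀` is, along every simple path starting at `v₀`,
either strictly increasing or identically zero. -/
theorem dirichlet_eigenvector_increasing_on_paths {V : Type*} [Fintype V] [DecidableEq V]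
    (T : SimpleGraph V) (hT : T.IsTree) (v₀ : V)
    (w : V → V → ℝ) (hsym : ∀ u v, w u v = w v u)
    (hpos : ∀ u v, T.Adj u v ↔ 0 < w u v)
    (hzero : ∀ u v, ¬ T.Adj u v → w u v = 0)
    (f : V → ℝ) (hv₀ : f v₀ = 0) (hnn : ∀ v, 0 ≤ f v)
    (heig : (dirichletMatrix w ({v₀}ᶜ : Set V)) *ᵥ (fun a => f a.1) =
      minEig (dirichletMatrix w ({v₀}ᶜ : Set V)) • (fun a => f a.1)) :
    ∀ (u : V) (p : T.Walk v₀ u), p.IsPath →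
      (p.support.map f).Chain' (· < ·) ∨ ∀ x ∈ p.support, f x = 0 := by
  classical
  set ν := minEig (dirichletMatrix w ({v₀}ᶜ : Set V)) with hνdef
  have hconn : T.Connected := hT.isConnected
  -- nonnegativity of weights
  have wnn : ∀ a b, 0 ≤ w a b := by
    intro a b
    by_cases h : T.Adj a b
    · exact le_of_lt ((hpos a b).1 h)
    · rw [hzero a b h]
  -- sum over the subtype equals sum over V when the function vanishes at v₀
  have subsum : ∀ g : V → ℝ, g v₀ = 0 →
      (∑ j : ({v₀}ᶜ : Set V), g j.1) = ∑ j, g j := by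
    intro g hg
    rw [Finset.sum_set_coe]
    rw [Set.toFinset_compl, Set.toFinset_singleton]
    rw [← Finset.sum_add_sum_compl ({v₀} : Finset V) g]
    simp [hg]
  -- the local eigenvalue equation at interior vertices
  have eigeq : ∀ x : V, x ≠ v₀ → ∑ y, w x y * (f x - f y) = ν * f x := by
    intro x hx
    have hxS : x ∈ ({v₀}ᶜ : Set V) := by simp [hx]
    have h1 := congrFun heig ⟨x, hxS⟩
    simp only [Matrix.mulVec, dotProduct, dirichletMatrix, Matrix.submatrix_apply,
      wLap, Matrix.sub_apply, Matrix.diagonal_apply, Matrix.of_apply, Pi.smul_apply,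
      smul_eq_mul] at h1
    rw [subsum (fun j => ((if x = j then ∑ u, w x u else 0) - w x j) * f j)
      (by simp [hv₀])] at h1
    rw [← h1]
    have e1 : ∀ y : V, w x y * (f x - f y)
        = w x y * f x - w x y * f y := by intro y; ring
    have e2 : ∀ y : V, ((if x = y then ∑ u, w x u else 0) - w x y) * f y
        = (if x = y then (∑ u, w x u) * f y else 0) - w x y * f y := by
      intro y; by_cases h : x = y <;> simp [h] <;> ring
    simp only [e1, e2]
    rw [Finset.sum_sub_distrib, Finset.sum_sub_distrib]
    congr 1
    rw [← Finset.sum_mul, Finset.sum_ite_eq Finset.univ x (fun y => (∑ u, w x u) * f y)]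
    simp
  -- zero spreading along edges
  have spread : ∀ x y, x ≠ v₀ → f x = 0 → T.Adj x y → f y = 0 := by
    intro x y hx hfx hadj
    have h := eigeq x hx
    rw [hfx] at h
    have h2 : ∑ z, w x z * f z = 0 := by
      have : ∑ z, w x z * (0 - f z) = - ∑ z, w x z * f z := by
        rw [← Finset.sum_neg_distrib]; apply Finset.sum_congr rfl; intro z _; ring
      rw [this] at h; linarith
    have h3 := (Finset.sum_eq_zero_iff_of_nonneg
      (fun z _ => mul_nonneg (wnn x z) (hnn z))).1 h2 y (Finset.mem_univ y)
    have hw := (hpos x y).1 hadj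
    rcases mul_eq_zero.1 h3 with h | h
    · exact absurd h (ne_of_gt hw)
    · exact h
  -- in a tree, the length of a path equals the distance
  have pathlen : ∀ {a b : V} (P : T.Walk a b), P.IsPath → P.length = T.dist a b := by
    intro a b P hP
    obtain ⟨Q, hQpath, hQlen⟩ := hconn.exists_path_of_dist a b
    rw [(hT.existsUnique_path a b).unique hP hQpath, hQlen]
  have distsplit : ∀ {a b : V} (P : T.Walk a b), P.IsPath → ∀ c (hc : c ∈ P.support),
      T.dist a b = T.dist a c + T.dist c b := by
    intro a b P hP c hc
    have h1 := pathlen _ (hP.takeUntil hc)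
    have h2 := pathlen _ (hP.dropUntil hc)
    have h3 := pathlen P hP
    rw [← h1, ← h2, ← h3, ← SimpleGraph.Walk.length_append, SimpleGraph.Walk.take_spec]
  have adj_dist : ∀ {a b : V}, T.Adj a b → T.dist a b = 1 := by
    intro a b h; exact SimpleGraph.dist_eq_one_iff_adj.2 h
  -- adjacent vertices have different distances to every vertex (trees are bipartite)
  have dist_ne : ∀ p u x, T.Adj p u → T.dist x u ≠ T.dist x p := by
    intro p u x hadj heq
    obtain ⟨P, hPpath, hPlen⟩ := hconn.exists_path_of_dist x p
    by_cases hu : u ∈ P.support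
    · have h := distsplit P hPpath u hu
      rw [adj_dist hadj.symm] at h
      omega
    · have hQpath : (P.concat hadj).IsPath := by
        rw [← SimpleGraph.Walk.reverse_reverse (P.concat hadj)]
        apply SimpleGraph.Walk.IsPath.reverse
        rw [SimpleGraph.Walk.reverse_concat]
        exact (hPpath.reverse).cons
          (by rwa [SimpleGraph.Walk.support_reverse, List.mem_reverse])
      have h := pathlen _ hQpath
      rw [SimpleGraph.Walk.length_concat, hPlen] at h
      omega
  -- crossing lemma: the only edge across the cut determined by an edge
  have crossing : ∀ p u x y, T.Adj p u → T.Adj x y →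
      T.dist x u < T.dist x p → ¬ (T.dist y u < T.dist y p) → x = u ∧ y = p := by
    intro p u x y hpu hxy hx hy
    have hdup : T.dist u p = 1 := adj_dist hpu.symm
    have hdxy : T.dist x y = 1 := adj_dist hxy
    have hdxp : T.dist x p = T.dist x u + 1 := by
      have h1 : T.dist x p ≤ T.dist x u + 1 := by
        have := hconn.dist_triangle (u := x) (v := u) (w := p)
        omega
      have := dist_ne p u x hpu
      omega
    have hdyu : T.dist y u = T.dist y p + 1 := by
      have h1 : T.dist y u ≤ T.dist y p + 1 := by
        have := hconn.dist_triangle (u := y) (v := p) (w := u)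
        have := adj_dist hpu
        omega
      have := dist_ne p u y hpu
      omega
    have h3 : T.dist x p ≤ 1 + T.dist y p := by
      have := hconn.dist_triangle (u := x) (v := y) (w := p)
      omega
    have h4 : T.dist y u ≤ 1 + T.dist x u := by
      have := hconn.dist_triangle (u := y) (v := x) (w := u)
      have : T.dist y x = 1 := by rw [SimpleGraph.dist_comm]; exact hdxy
      omega
    have hyp_eq : T.dist y p = T.dist x u := by omega
    have hdyu' : T.dist y u = T.dist x u + 1 := by omega
    obtain ⟨Pxu, hPxu, hPxulen⟩ := hconn.exists_path_of_dist x u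
    have hynot : y ∉ Pxu.support := by
      intro hy'
      have := distsplit Pxu hPxu y hy'
      omega
    have hQ : (SimpleGraph.Walk.cons hxy.symm Pxu).IsPath := hPxu.cons hynot
    obtain ⟨Pyp, hPyp, hPyplen⟩ := hconn.exists_path_of_dist y p
    have hunot : u ∉ Pyp.support := by
      intro hu'
      have := distsplit Pyp hPyp u hu'
      omega
    have hR : (Pyp.concat hpu).IsPath := by
      rw [← SimpleGraph.Walk.reverse_reverse (Pyp.concat hpu)]
      apply SimpleGraph.Walk.IsPath.reverse
      rw [SimpleGraph.Walk.reverse_concat]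
      exact (hPyp.reverse).cons
        (by rwa [SimpleGraph.Walk.support_reverse, List.mem_reverse])
    have hQR : SimpleGraph.Walk.cons hxy.symm Pxu = Pyp.concat hpu :=
      (hT.existsUnique_path y u).unique hQ hR
    have hpQ : p ∈ (SimpleGraph.Walk.cons hxy.symm Pxu).support := by
      rw [hQR, SimpleGraph.Walk.support_concat]
      exact List.mem_append_left _ (SimpleGraph.Walk.end_mem_support Pyp)
    rw [SimpleGraph.Walk.support_cons, List.mem_cons] at hpQ
    rcases hpQ with hpy | hpP
    · have hxu : T.dist x u = 0 := by
        rw [hpy, SimpleGraph.dist_self] at hyp_eq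
        omega
      exact ⟨hconn.dist_eq_zero_iff.1 hxu, hpy.symm⟩
    · exfalso
      have := distsplit Pxu hPxu p hpP
      have hdpu : T.dist p u = 1 := adj_dist hpu
      omega
  -- the cut identity
  have cut : ∀ p u, T.Adj p u → ¬ (T.dist v₀ u < T.dist v₀ p) →
      ν * ∑ x ∈ Finset.univ.filter (fun x => T.dist x u < T.dist x p), f x
        = w u p * (f u - f p) := by
    intro p u hpu hv0
    set A := Finset.univ.filter (fun x => T.dist x u < T.dist x p) with hAdef
    have hmemA : ∀ x, x ∈ A ↔ T.dist x u < T.dist x p := by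
      intro x; simp [hAdef]
    have hxA : ∀ x ∈ A, x ≠ v₀ := by
      intro x hx h
      subst h
      exact hv0 ((hmemA _).1 hx)
    have huA : u ∈ A := by
      rw [hmemA, SimpleGraph.dist_self, adj_dist hpu.symm]; omega
    have hpA : p ∈ Aᶜ := by
      rw [Finset.mem_compl, hmemA, SimpleGraph.dist_self, adj_dist hpu]; omega
    have step1 : ∑ x ∈ A, (ν * f x) = ∑ x ∈ A, ∑ y, w x y * (f x - f y) :=
      Finset.sum_congr rfl (fun x hx => (eigeq x (hxA x hx)).symm)
    have anti : ∑ x ∈ A, ∑ y ∈ A, w x y * (f x - f y) = 0 := by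
      have hS : ∑ x ∈ A, ∑ y ∈ A, w x y * (f x - f y)
          = - ∑ x ∈ A, ∑ y ∈ A, w x y * (f x - f y) := by
        nth_rewrite 1 [Finset.sum_comm]
        rw [← Finset.sum_neg_distrib]
        apply Finset.sum_congr rfl; intro x _
        rw [← Finset.sum_neg_distrib]
        apply Finset.sum_congr rfl; intro y _
        rw [hsym y x]; ring
      linarith
    have crossterm : ∑ x ∈ A, ∑ y ∈ Aᶜ, w x y * (f x - f y)
        = w u p * (f u - f p) := by
      rw [Finset.sum_eq_single_of_mem u huA]
      · rw [Finset.sum_eq_single_of_mem p hpA]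
        intro y hy hyne
        by_cases hadj : T.Adj u y
        · exfalso
          have hc := crossing p u u y hpu hadj ((hmemA _).1 huA)
            (by rw [Finset.mem_compl, hmemA] at hy; exact hy)
          exact hyne hc.2
        · rw [hzero _ _ hadj]; ring
      · intro x hx hxne
        apply Finset.sum_eq_zero
        intro y hy
        by_cases hadj : T.Adj x y
        · exfalso
          have hc := crossing p u x y hpu hadj ((hmemA _).1 hx)
            (by rw [Finset.mem_compl, hmemA] at hy; exact hy)
          exact hxne hc.1
        · rw [hzero _ _ hadj]; ring
    have split : ∑ x ∈ A, ∑ y, w x y * (f x - f y)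
        = ∑ x ∈ A, ∑ y ∈ A, w x y * (f x - f y)
          + ∑ x ∈ A, ∑ y ∈ Aᶜ, w x y * (f x - f y) := by
      rw [← Finset.sum_add_distrib]
      apply Finset.sum_congr rfl; intro x _
      rw [Finset.sum_add_sum_compl]
    rw [Finset.mul_sum, step1, split, anti, crossterm, zero_add]
  -- main case split: f identically zero or not
  by_cases hall : ∀ x : V, f x = 0
  · intro u p _
    right
    intro x _
    exact hall x
  · push_neg at hall
    obtain ⟨x₀, hx₀⟩ := hall
    have hx₀pos : 0 < f x₀ := (hnn x₀).lt_of_ne (Ne.symm hx₀)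
    obtain ⟨m, -, hm'⟩ := Finset.exists_max_image Finset.univ f ⟨v₀, Finset.mem_univ v₀⟩
    have hm : ∀ y, f y ≤ f m := fun y => hm' y (Finset.mem_univ y)
    have hmpos : 0 < f m := lt_of_lt_of_le hx₀pos (hm x₀)
    have hmne : m ≠ v₀ := by
      intro h; rw [h, hv₀] at hmpos; exact lt_irrefl _ hmpos
    have hν0 : 0 ≤ ν := by
      have h := eigeq m hmne
      have hge : 0 ≤ ∑ y, w m y * (f m - f y) :=
        Finset.sum_nonneg fun y _ => mul_nonneg (wnn m y) (sub_nonneg.2 (hm y))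
      nlinarith
    have hνpos : 0 < ν := by
      rcases hν0.lt_or_eq with h | h
      · exact h
      exfalso
      have spreadmax : ∀ x y, x ≠ v₀ → f x = f m → T.Adj x y → f y = f m := by
        intro x y hx hfx hadj
        have he := eigeq x hx
        rw [← h, zero_mul] at he
        have h3 := (Finset.sum_eq_zero_iff_of_nonneg (fun z _ =>
          mul_nonneg (wnn x z) (sub_nonneg.2 (by rw [hfx]; exact hm z)))).1 he y
          (Finset.mem_univ y)
        have hw := (hpos x y).1 hadj
        rcases mul_eq_zero.1 h3 with h' | h'
        · exact absurd h' (ne_of_gt hw)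
        · rw [← hfx]; linarith [sub_eq_zero.1 h']
      obtain ⟨W⟩ := hconn.preconnected m v₀
      have key : ∀ {a b : V} (W' : T.Walk a b), f a = f m → f b = f m := by
        intro a b W'
        induction W' with
        | nil => intro ha; exact ha
        | @cons a c d hadj q ih =>
          intro ha
          by_cases hav : a = v₀
          · rw [hav, hv₀] at ha; exact absurd ha.symm (ne_of_gt hmpos)
          · exact ih (spreadmax a c hav ha hadj)
      have := key W rfl
      rw [hv₀] at this
      exact (ne_of_gt hmpos) this.symm
    -- positive case: strict monotonicity
    have edge : ∀ a c, T.Adj a c → T.dist v₀ c = T.dist v₀ a + 1 → 0 < f c →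
        f a < f c := by
      intro a c hadj hd hfc
      have hnotlt : ¬ (T.dist v₀ c < T.dist v₀ a) := by omega
      have hcut := cut a c hadj hnotlt
      have hcA : c ∈ Finset.univ.filter (fun x => T.dist x c < T.dist x a) := by
        simp [SimpleGraph.dist_self, adj_dist hadj.symm]
      have hsum : f c ≤ ∑ x ∈ Finset.univ.filter
          (fun x => T.dist x c < T.dist x a), f x :=
        Finset.single_le_sum (fun i _ => hnn i) hcA
      have hwpos : 0 < w c a := (hpos c a).1 hadj.symm
      have h1 : 0 < ν * ∑ x ∈ Finset.univ.filter
          (fun x => T.dist x c < T.dist x a), f x :=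
        lt_of_lt_of_le (mul_pos hνpos hfc) (mul_le_mul_of_nonneg_left hsum hνpos.le)
      rw [hcut] at h1
      by_contra hcon
      push_neg at hcon
      nlinarith
    have chain : ∀ {a b : V} (P : T.Walk a b), P.IsPath →
        T.dist v₀ a + P.length = T.dist v₀ b →
        (∀ x ∈ P.support, x ≠ v₀ → 0 < f x) →
        P.support.Chain' (fun s t => f s < f t) := by
      intro a b P
      induction P with
      | nil => intro _ _ _; simp [List.Chain']
      | @cons a c b hadj q ih =>
        intro hp hd hposs
        have hdcb : T.dist c b ≤ q.length := SimpleGraph.dist_le q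
        have hdac : T.dist v₀ c ≤ T.dist v₀ a + 1 := by
          have := hconn.dist_triangle (u := v₀) (v := a) (w := c)
          have := adj_dist hadj
          omega
        have htri : T.dist v₀ b ≤ T.dist v₀ c + T.dist c b :=
          hconn.dist_triangle
        have hlen : (SimpleGraph.Walk.cons hadj q).length = q.length + 1 :=
          SimpleGraph.Walk.length_cons _ _
        have hc1 : T.dist v₀ c = T.dist v₀ a + 1 := by omega
        have hc2 : T.dist v₀ c + q.length = T.dist v₀ b := by omega
        have hq : q.IsPath := ((SimpleGraph.Walk.cons_isPath_iff _ _).1 hp).1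
        have hcne : c ≠ v₀ := by
          intro h; rw [h, SimpleGraph.dist_self] at hc1; omega
        have hfc : 0 < f c := hposs c
          (by rw [SimpleGraph.Walk.support_cons]
              exact List.mem_cons_of_mem _ (SimpleGraph.Walk.start_mem_support q)) hcne
        have hstep : f a < f c := edge a c hadj hc1 hfc
        have hrest := ih hq hc2 (fun x hx hxne => hposs x
          (by rw [SimpleGraph.Walk.support_cons]; exact List.mem_cons_of_mem _ hx) hxne)
        rw [SimpleGraph.Walk.support_cons]
        rw [SimpleGraph.Walk.support_eq_cons q] at hrest ⊢
        exact List.isChain_cons_cons.2 ⟨hstep, hrest⟩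
    -- spreading zeroes forward along a walk avoiding v₀
    have spread_fwd : ∀ {a b : V} (Q : T.Walk a b), v₀ ∉ Q.support → f a = 0 →
        ∀ y ∈ Q.support, f y = 0 := by
      intro a b Q
      induction Q with
      | nil =>
        intro _ ha y hy
        rw [SimpleGraph.Walk.support_nil, List.mem_singleton] at hy
        rw [hy]; exact ha
      | @cons a c b hadj q ih =>
        intro hv hfa y hy
        rw [SimpleGraph.Walk.support_cons, List.mem_cons] at hv hy
        push_neg at hv
        have hane : a ≠ v₀ := fun h => hv.1 h.symm
        have hfc : f c = 0 := spread a c hane hfa hadj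
        rcases hy with rfl | hy
        · exact hfa
        · exact ih hv.2 hfc y hy
    -- final assembly
    intro u p hp
    by_cases hez : ∃ z ∈ p.support, z ≠ v₀ ∧ f z = 0
    · right
      obtain ⟨z, hzmem, hzne, hfz⟩ := hez
      cases p with
      | nil =>
        rw [SimpleGraph.Walk.support_nil, List.mem_singleton] at hzmem
        exact absurd hzmem hzne
      | @cons a c b hadj q =>
        have hq : q.IsPath ∧ v₀ ∉ q.support :=
          (SimpleGraph.Walk.cons_isPath_iff _ _).1 hp
        have hzq : z ∈ q.support := by
          rw [SimpleGraph.Walk.support_cons, List.mem_cons] at hzmem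
          rcases hzmem with rfl | hzq
          · exact absurd rfl hzne
          · exact hzq
        have hfc : f c = 0 := by
          have htake := hq.1.takeUntil hzq
          have hv0not : v₀ ∉ (q.takeUntil z hzq).reverse.support := by
            rw [SimpleGraph.Walk.support_reverse, List.mem_reverse]
            intro hc
            exact hq.2 (SimpleGraph.Walk.support_takeUntil_subset _ _ hc)
          exact spread_fwd _ hv0not hfz c
            (SimpleGraph.Walk.end_mem_support _)
        intro x hx
        rw [SimpleGraph.Walk.support_cons, List.mem_cons] at hx
        rcases hx with rfl | hx
        · exact hv₀
        · exact spread_fwd q hq.2 hfc x hx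
    · left
      push_neg at hez
      rw [List.Chain', List.isChain_map]
      apply chain p hp
      · rw [SimpleGraph.dist_self, Nat.zero_add]
        exact pathlen p hp
      · intro x hx hxne
        exact (hnn x).lt_of_ne (Ne.symm (hez x hx hxne))
end

section
/- Let T₀ be a rooted tree with root v₀ and trunk (a longest path starting at v₀) containing vertices v_i, v_j with heights h(v_i) < h(v_j). If T₀' is obtained from T₀ by detaching a pendant vertex w ≠ v₀ from v_i and attaching it to v_j instead, then ν(T₀') < ν(T₀). -/
open Matrix BigOperators
open scoped Classical

/-- Edge weights of a rooted tree: every edge has weight 1 except the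
boundary edge from the root `v₀` to the distinguished neighbor `x`,
which has weight `w₀`. -/
noncomputable def treeWeight {V : Type*} [Fintype V] [DecidableEq V]
    (T : SimpleGraph V) (v₀ x : V) (w₀ : ℝ) : V → V → ℝ :=
  fun u v => if T.Adj u v then
    (if (u = v₀ ∧ v = x) ∨ (u = x ∧ v = v₀) then w₀ else 1) else 0

/-- First Dirichlet eigenvalue of a rooted tree (root = unique boundary vertex). -/
noncomputable def nuRooted {V : Type*} [Fintype V] [DecidableEq V]
    (T : SimpleGraph V) (v₀ x : V) (w₀ : ℝ) : ℝ :=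
  minEig (dirichletMatrix (treeWeight T v₀ x w₀) ({v₀}ᶜ : Set V))

/-- A caterpillar: the non-pendant vertices can be arranged as a path. -/
noncomputable def IsCaterpillar {V : Type*} [Fintype V] [DecidableEq V]
    (T : SimpleGraph V) : Prop :=
  ∃ P : List V, P.Nodup ∧ (∀ v, v ∈ P ↔ 1 < T.degree v) ∧ P.Chain' T.Adj


set_option linter.unusedSectionVars false

section Aux

lemma minEig_le_eigenvalues {W : Type*} [Fintype W] [DecidableEq W] [Nonempty W]
    {A : Matrix W W ℝ} (hA : A.IsHermitian) (i : W) :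
    minEig A ≤ hA.eigenvalues i := by
  have hcard : 0 < Fintype.card W := Fintype.card_pos
  rw [minEig, kthEig, dif_pos hA, dif_pos hcard]
  set g : Fin (Fintype.card W) → ℝ := hA.eigenvalues ∘ (Fintype.equivFin W).symm with hg
  have : hA.eigenvalues i = (g ∘ Tuple.sort g) ((Tuple.sort g).symm ((Fintype.equivFin W) i)) := by
    simp [hg]
  rw [this]
  exact Tuple.monotone_sort g (by simp [Fin.le_def])

lemma minEig_mul_le_rayleigh {W : Type*} [Fintype W] [DecidableEq W] [Nonempty W]
    {A : Matrix W W ℝ} (hA : A.IsHermitian) (g : W → ℝ) :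
    minEig A * (g ⬝ᵥ g) ≤ g ⬝ᵥ (A *ᵥ g) := by
  have hU : (hA.eigenvectorUnitary : Matrix W W ℝ) * star (hA.eigenvectorUnitary : Matrix W W ℝ) = 1 :=
    (Matrix.mem_unitaryGroup_iff).mp (hA.eigenvectorUnitary).2
  set U := (hA.eigenvectorUnitary : Matrix W W ℝ) with hUdef
  set c := star U *ᵥ g with hc
  have key : A *ᵥ g = U *ᵥ (Matrix.diagonal hA.eigenvalues *ᵥ c) := by
    conv_lhs => rw [hA.spectral_theorem]
    simp [hc, mulVec_mulVec, Matrix.mul_assoc]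
    rfl
  have dot1 : ∀ y : W → ℝ, g ⬝ᵥ (U *ᵥ y) = c ⬝ᵥ y := by
    intro y
    rw [hc, Matrix.dotProduct_mulVec, ← Matrix.mulVec_transpose]
    simp [Matrix.star_eq_conjTranspose, Matrix.conjTranspose_eq_transpose_of_trivial]
  have hgg : g ⬝ᵥ g = c ⬝ᵥ c := by
    have h2 : g ⬝ᵥ (U *ᵥ c) = g ⬝ᵥ g := by
      rw [hc, Matrix.mulVec_mulVec, hU, Matrix.one_mulVec]
    rw [← h2, dot1]
  have hAg : g ⬝ᵥ (A *ᵥ g) = ∑ i, hA.eigenvalues i * (c i)^2 := by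
    rw [key, dot1]
    simp [Matrix.mulVec_diagonal, dotProduct, sq, mul_comm, mul_assoc, mul_left_comm]
  rw [hAg, hgg]
  have : minEig A * (c ⬝ᵥ c) = ∑ i, minEig A * (c i)^2 := by
    simp [dotProduct, Finset.mul_sum, sq]
  rw [this]
  apply Finset.sum_le_sum
  intro i _
  exact mul_le_mul_of_nonneg_right (minEig_le_eigenvalues hA i) (sq_nonneg _)

lemma minEig_lt_of_rayleigh {W : Type*} [Fintype W] [DecidableEq W]
    {A : Matrix W W ℝ} (hA : A.IsHermitian) (g : W → ℝ) (c : ℝ)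
    (h : g ⬝ᵥ (A *ᵥ g) < c * (g ⬝ᵥ g)) : minEig A < c := by
  have hnn : (0:ℝ) ≤ g ⬝ᵥ g := Finset.sum_nonneg (fun i _ => mul_self_nonneg _)
  have hgg : 0 < g ⬝ᵥ g := by
    rcases lt_or_eq_of_le hnn with h' | h'
    · exact h'
    · exfalso
      have hg0 : g = 0 := by
        funext i
        have h3 := (Finset.sum_eq_zero_iff_of_nonneg
          (fun i (_ : i ∈ Finset.univ) => mul_self_nonneg (g i))).mp h'.symm
        show g i = (0 : W → ℝ) i
        simp only [Pi.zero_apply]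
        exact mul_self_eq_zero.mp (h3 i (Finset.mem_univ i))
      rw [hg0] at h
      simp at h
  have hne : Nonempty W := by
    rcases isEmpty_or_nonempty W with hW | hW
    · exact absurd hgg (by simp [dotProduct])
    · exact hW
  have h1 := minEig_mul_le_rayleigh hA g
  nlinarith

variable {V : Type*} [Fintype V] [DecidableEq V]


/-- extension of a function on the complement of `v₀` by zero -/
noncomputable def extZ (v₀ : V) (f : ({v₀}ᶜ : Set V) → ℝ) : V → ℝ :=
  fun v => if h : v = v₀ then 0 else f ⟨v, by simp [h]⟩

lemma extZ_root (v₀ : V) (f : ({v₀}ᶜ : Set V) → ℝ) : extZ v₀ f v₀ = 0 := by simp [extZ]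

lemma extZ_apply (v₀ : V) (f : ({v₀}ᶜ : Set V) → ℝ) (a : ({v₀}ᶜ : Set V)) :
    extZ v₀ f a.val = f a := by
  have h : (a.val : V) ≠ v₀ := a.property
  simp [extZ, h]

lemma sum_compl_singleton (v₀ : V) (F : V → ℝ) :
    ∑ b : ({v₀}ᶜ : Set V), F b.val = ∑ b : V, if b = v₀ then 0 else F b := by
  classical
  rw [← Finset.sum_subtype (Finset.univ.filter (fun x => x ∈ ({v₀}ᶜ : Set V)))
    (by intro x; simp) (fun b => F b)]
  rw [Finset.sum_filter]
  apply Finset.sum_congr rfl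
  intro b _
  by_cases hb : b = v₀ <;> simp [hb]

lemma dirichlet_mulVec_apply (v₀ : V) (w : V → V → ℝ) (f : ({v₀}ᶜ : Set V) → ℝ)
    (a : ({v₀}ᶜ : Set V)) :
    (dirichletMatrix w ({v₀}ᶜ : Set V) *ᵥ f) a
      = (∑ u, w a.val u) * extZ v₀ f a.val - ∑ u, w a.val u * extZ v₀ f u := by
  classical
  have : (dirichletMatrix w ({v₀}ᶜ : Set V) *ᵥ f) a
      = ∑ b : ({v₀}ᶜ : Set V), ((if (a.val : V) = b.val then ∑ u, w a.val u else 0)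
          - w a.val b.val) * f b := by
    simp [dirichletMatrix, Matrix.mulVec, dotProduct, wLap, Matrix.diagonal,
      Matrix.sub_apply]
  rw [this]
  have h1 : ∀ b : ({v₀}ᶜ : Set V), ((if (a.val : V) = b.val then ∑ u, w a.val u else 0)
      - w a.val b.val) * f b
      = (if (a.val : V) = b.val then (∑ u, w a.val u) * extZ v₀ f b.val else 0)
        - w a.val b.val * extZ v₀ f b.val := by
    intro b
    rw [extZ_apply]
    by_cases h : (a.val : V) = b.val <;> simp [h, sub_mul]
  rw [Finset.sum_congr rfl (fun b _ => h1 b), Finset.sum_sub_distrib]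
  congr 1
  · rw [sum_compl_singleton v₀ (fun b => if (a.val : V) = b then (∑ u, w a.val u) * extZ v₀ f b else 0)]
    have hav : (a.val : V) ≠ v₀ := a.property
    rw [Finset.sum_eq_single (a.val : V)]
    · simp [hav]
    · intro b _ hb
      by_cases h1 : b = v₀
      · simp [h1]
      · simp [h1, Ne.symm hb]
    · intro h; exact absurd (Finset.mem_univ _) h
  · rw [sum_compl_singleton v₀ (fun b => w a.val b * extZ v₀ f b)]
    apply Finset.sum_congr rfl
    intro b _
    by_cases hb : b = v₀ <;> simp [hb, extZ_root]

lemma dirichlet_dot (v₀ : V) (w : V → V → ℝ) (f : ({v₀}ᶜ : Set V) → ℝ) :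
    f ⬝ᵥ (dirichletMatrix w ({v₀}ᶜ : Set V) *ᵥ f)
      = ∑ a : V, ∑ u : V, w a u * (extZ v₀ f a * (extZ v₀ f a - extZ v₀ f u)) := by
  classical
  have h1 : f ⬝ᵥ (dirichletMatrix w ({v₀}ᶜ : Set V) *ᵥ f)
      = ∑ a : ({v₀}ᶜ : Set V), (fun b : V => ∑ u : V, w b u * (extZ v₀ f b * (extZ v₀ f b - extZ v₀ f u))) a.val := by
    rw [dotProduct]
    apply Finset.sum_congr rfl
    intro a _
    rw [dirichlet_mulVec_apply v₀ w f a]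
    simp only [extZ_apply]
    have hrhs : ∑ u : V, w a.val u * (f a * (f a - extZ v₀ f u))
        = (∑ u : V, w a.val u) * (f a * f a) - (∑ u : V, w a.val u * extZ v₀ f u) * f a := by
      rw [Finset.sum_mul, Finset.sum_mul, ← Finset.sum_sub_distrib]
      apply Finset.sum_congr rfl
      intro u _
      ring
    rw [hrhs]
    ring
  rw [h1, sum_compl_singleton v₀ (fun b : V => ∑ u : V, w b u * (extZ v₀ f b * (extZ v₀ f b - extZ v₀ f u)))]
  apply Finset.sum_congr rfl
  intro b _
  by_cases hb : b = v₀ <;> simp [hb, extZ_root]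

lemma dot_self_ext (v₀ : V) (f : ({v₀}ᶜ : Set V) → ℝ) :
    f ⬝ᵥ f = ∑ a : V, (extZ v₀ f a)^2 := by
  classical
  have h1 : f ⬝ᵥ f = ∑ a : ({v₀}ᶜ : Set V), (fun b : V => (extZ v₀ f b)^2) a.val := by
    rw [dotProduct]
    apply Finset.sum_congr rfl
    intro a _
    simp only [extZ_apply]
    ring
  rw [h1, sum_compl_singleton v₀ (fun b : V => (extZ v₀ f b)^2)]
  apply Finset.sum_congr rfl
  intro b _
  by_cases hb : b = v₀ <;> simp [hb, extZ_root]

lemma symm_double (w : V → V → ℝ) (hw : ∀ a u, w a u = w u a) (h : V → ℝ) :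
    2 * (∑ a : V, ∑ u : V, w a u * (h a * (h a - h u)))
      = ∑ a : V, ∑ u : V, w a u * (h a - h u)^2 := by
  have hswap : (∑ a : V, ∑ u : V, w a u * (h a * (h a - h u)))
      = ∑ a : V, ∑ u : V, w a u * (h u * (h u - h a)) := by
    rw [Finset.sum_comm]
    apply Finset.sum_congr rfl; intro a _
    apply Finset.sum_congr rfl; intro u _
    rw [hw a u]
  have : 2 * (∑ a : V, ∑ u : V, w a u * (h a * (h a - h u)))
      = (∑ a : V, ∑ u : V, w a u * (h a * (h a - h u)))
        + (∑ a : V, ∑ u : V, w a u * (h u * (h u - h a))) := by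
    rw [← hswap]; ring
  rw [this, ← Finset.sum_add_distrib]
  apply Finset.sum_congr rfl; intro a _
  rw [← Finset.sum_add_distrib]
  apply Finset.sum_congr rfl; intro u _
  ring

lemma eigen_coord (v₀ : V) (w : V → V → ℝ) (f : ({v₀}ᶜ : Set V) → ℝ) (ν : ℝ)
    (hf : dirichletMatrix w ({v₀}ᶜ : Set V) *ᵥ f = ν • f)
    (v : V) (hv : v ≠ v₀) :
    (∑ u, w v u) * extZ v₀ f v - ∑ u, w v u * extZ v₀ f u = ν * extZ v₀ f v := by
  have hmem : v ∈ ({v₀}ᶜ : Set V) := by simp [hv]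
  have := congrFun hf ⟨v, hmem⟩
  rw [dirichlet_mulVec_apply v₀ w f ⟨v, hmem⟩] at this
  simpa [extZ_apply v₀ f ⟨v, hmem⟩] using this


lemma expand_row (w : V → V → ℝ) (h : V → ℝ) (v : V) :
    (∑ u, w v u) * h v - ∑ u, w v u * h u = ∑ u, w v u * (h v - h u) := by
  rw [Finset.sum_mul, ← Finset.sum_sub_distrib]
  apply Finset.sum_congr rfl
  intro u _
  ring

lemma antisymm_double (w : V → V → ℝ) (hw : ∀ a u, w a u = w u a) (h : V → ℝ)
    (s : Finset V) :
    ∑ v ∈ s, ∑ u ∈ s, w v u * (h v - h u) = 0 := by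
  have hswap : ∑ v ∈ s, ∑ u ∈ s, w v u * (h v - h u)
      = ∑ v ∈ s, ∑ u ∈ s, w u v * (h u - h v) := by
    rw [Finset.sum_comm]
  have h2 : ∑ v ∈ s, ∑ u ∈ s, w v u * (h v - h u)
      = - ∑ v ∈ s, ∑ u ∈ s, w v u * (h v - h u) := by
    nth_rewrite 2 [hswap]
    rw [← Finset.sum_neg_distrib]
    apply Finset.sum_congr rfl; intro v _
    rw [← Finset.sum_neg_distrib]
    apply Finset.sum_congr rfl; intro u _
    rw [hw v u]; ring
  linarith

variable {V : Type*} [Fintype V] [DecidableEq V]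

lemma treeWeight_symm (T : SimpleGraph V) (v₀ x : V) (w₀ : ℝ) (u v : V) :
    treeWeight T v₀ x w₀ u v = treeWeight T v₀ x w₀ v u := by
  unfold treeWeight
  by_cases h : T.Adj u v
  · rw [if_pos h, if_pos h.symm]
    by_cases h2 : (u = v₀ ∧ v = x) ∨ (u = x ∧ v = v₀)
    · rw [if_pos h2, if_pos (by tauto)]
    · rw [if_neg h2, if_neg (by tauto)]
  · rw [if_neg h, if_neg (fun h' => h h'.symm)]

lemma treeWeight_nonneg (T : SimpleGraph V) (v₀ x : V) {w₀ : ℝ} (hw₀ : 1 ≤ w₀) (u v : V) :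
    0 ≤ treeWeight T v₀ x w₀ u v := by
  unfold treeWeight; split_ifs <;> linarith

lemma treeWeight_pos (T : SimpleGraph V) (v₀ x : V) {w₀ : ℝ} (hw₀ : 1 ≤ w₀) {u v : V}
    (h : T.Adj u v) : 0 < treeWeight T v₀ x w₀ u v := by
  unfold treeWeight; rw [if_pos h]; split_ifs <;> linarith

lemma treeWeight_of_not_adj (T : SimpleGraph V) (v₀ x : V) (w₀ : ℝ) {u v : V}
    (h : ¬ T.Adj u v) : treeWeight T v₀ x w₀ u v = 0 := by
  unfold treeWeight; rw [if_neg h]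

lemma treeWeight_root (T : SimpleGraph V) (v₀ x : V) (w₀ : ℝ) (hx : T.Adj v₀ x) :
    treeWeight T v₀ x w₀ v₀ x = w₀ := by
  unfold treeWeight; rw [if_pos hx, if_pos (Or.inl ⟨rfl, rfl⟩)]

lemma extZ_nonneg (v₀ : V) (f : ({v₀}ᶜ : Set V) → ℝ) (hfp : ∀ a, 0 < f a) (v : V) :
    0 ≤ extZ v₀ f v := by
  unfold extZ
  split_ifs with h
  · exact le_refl 0
  · exact (hfp _).le

lemma extZ_pos (v₀ : V) (f : ({v₀}ᶜ : Set V) → ℝ) (hfp : ∀ a, 0 < f a) {v : V} (hv : v ≠ v₀) :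
    0 < extZ v₀ f v := by
  unfold extZ
  rw [dif_neg hv]
  exact hfp _

lemma nu_pos (T : SimpleGraph V) (v₀ x : V) (hx : T.Adj v₀ x) {w₀ : ℝ} (hw₀ : 1 ≤ w₀)
    (f : ({v₀}ᶜ : Set V) → ℝ) (hfp : ∀ a, 0 < f a) (ν : ℝ)
    (hf : dirichletMatrix (treeWeight T v₀ x w₀) ({v₀}ᶜ : Set V) *ᵥ f = ν • f) :
    0 < ν := by
  classical
  set w := treeWeight T v₀ x w₀ with hw
  set F := extZ v₀ f with hF
  have key : ∀ v, v ≠ v₀ → ∑ u, w v u * (F v - F u) = ν * F v := by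
    intro v hv
    rw [← expand_row]
    exact eigen_coord v₀ w f ν hf v hv
  set s : Finset V := Finset.univ.filter (fun v => v ≠ v₀) with hs
  have hsum : ∑ v ∈ s, ∑ u, w v u * (F v - F u) = ν * ∑ v ∈ s, F v := by
    rw [Finset.mul_sum]
    apply Finset.sum_congr rfl
    intro v hv
    exact key v (by simpa [hs] using hv)
  have htot : ∑ v, ∑ u, w v u * (F v - F u) = 0 :=
    antisymm_double w (treeWeight_symm T v₀ x w₀) F Finset.univ
  have hsplit : ∑ v ∈ s, (∑ u, w v u * (F v - F u))
      + ∑ v ∈ Finset.univ.filter (fun v => ¬ v ≠ v₀), (∑ u, w v u * (F v - F u))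
      = ∑ v, ∑ u, w v u * (F v - F u) :=
    Finset.sum_filter_add_sum_filter_not Finset.univ (fun v => v ≠ v₀) _
  have hfilter : Finset.univ.filter (fun v : V => ¬ v ≠ v₀) = {v₀} := by
    ext v; simp
  have hroot : ∑ u, w v₀ u * (F v₀ - F u) = - ∑ u, w v₀ u * F u := by
    rw [← Finset.sum_neg_distrib]
    apply Finset.sum_congr rfl
    intro u _
    rw [hF, extZ_root]
    ring
  have heq : ν * ∑ v ∈ s, F v = ∑ u, w v₀ u * F u := by
    rw [← hsum]
    rw [hfilter, Finset.sum_singleton, hroot] at hsplit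
    rw [htot] at hsplit
    linarith
  have hxv₀ : x ≠ v₀ := hx.ne'
  have hx1 : w₀ * F x ≤ ∑ u, w v₀ u * F u := by
    have := Finset.single_le_sum (f := fun u => w v₀ u * F u)
      (fun u _ => mul_nonneg (treeWeight_nonneg T v₀ x hw₀ v₀ u) (extZ_nonneg v₀ f hfp u))
      (Finset.mem_univ x)
    rw [show w v₀ x = w₀ from treeWeight_root T v₀ x w₀ hx] at this
    exact this
  have hFx : 0 < F x := extZ_pos v₀ f hfp hxv₀
  have hs1 : F x ≤ ∑ v ∈ s, F v := by
    apply Finset.single_le_sum (f := fun v => F v)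
      (fun v _ => extZ_nonneg v₀ f hfp v)
    simp [hs, hxv₀]
  nlinarith

lemma f_lt_of_cut (T : SimpleGraph V) (hT : T.IsTree) (v₀ x : V) {w₀ : ℝ} (hw₀ : 1 ≤ w₀)
    (f : ({v₀}ᶜ : Set V) → ℝ) (hfp : ∀ a, 0 < f a) {ν : ℝ} (hν : 0 < ν)
    (hf : dirichletMatrix (treeWeight T v₀ x w₀) ({v₀}ᶜ : Set V) *ᵥ f = ν • f)
    {a b : V} (hab : T.Adj a b)
    (hreach : ¬(T.deleteEdges {s(a,b)}).Reachable b v₀) :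
    extZ v₀ f a < extZ v₀ f b := by
  classical
  set w := treeWeight T v₀ x w₀ with hw
  set F := extZ v₀ f with hFd
  have hbridge : ¬ (T \ SimpleGraph.fromEdgeSet {s(a,b)}).Reachable a b := by
    have h1 := (SimpleGraph.isAcyclic_iff_forall_edge_isBridge.mp hT.IsAcyclic)
      (T.mem_edgeSet.mpr hab)
    exact SimpleGraph.isBridge_iff.mp h1
  have hG' : T.deleteEdges {s(a,b)} = T \ SimpleGraph.fromEdgeSet {s(a,b)} := rfl
  set G' := T.deleteEdges {s(a,b)} with hG'd
  set Fs : Finset V := Finset.univ.filter (fun v => G'.Reachable b v) with hFs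
  have hbF : b ∈ Fs := by
    simp only [hFs, Finset.mem_filter, Finset.mem_univ, true_and]
    exact SimpleGraph.Reachable.refl b
  have haF : a ∉ Fs := by
    simp only [hFs, Finset.mem_filter, Finset.mem_univ, true_and]
    intro h
    exact hbridge (hG' ▸ h.symm)
  have hv₀F : v₀ ∉ Fs := by
    simp only [hFs, Finset.mem_filter, Finset.mem_univ, true_and]
    exact hreach
  have key : ∀ v, v ≠ v₀ → ∑ u, w v u * (F v - F u) = ν * F v := by
    intro v hv
    rw [← expand_row]
    exact eigen_coord v₀ w f ν hf v hv
  have hsum : ∑ v ∈ Fs, ∑ u, w v u * (F v - F u) = ν * ∑ v ∈ Fs, F v := by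
    rw [Finset.mul_sum]
    apply Finset.sum_congr rfl
    intro v hv
    have hvne : v ≠ v₀ := fun h => hv₀F (h ▸ hv)
    exact key v hvne
  -- split inner sums over Fs and its complement
  have hsplit : ∀ v : V, ∑ u, w v u * (F v - F u)
      = ∑ u ∈ Fs, w v u * (F v - F u) + ∑ u ∈ Fsᶜ, w v u * (F v - F u) := by
    intro v
    rw [add_comm, Finset.sum_compl_add_sum]
  have hzero : ∑ v ∈ Fs, ∑ u ∈ Fs, w v u * (F v - F u) = 0 :=
    antisymm_double w (treeWeight_symm T v₀ x w₀) F Fs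
  have hcross : ∑ v ∈ Fs, ∑ u ∈ Fsᶜ, w v u * (F v - F u) = w b a * (F b - F a) := by
    rw [Finset.sum_eq_single b]
    · rw [Finset.sum_eq_single a]
      · intro u hu hua
        by_cases hadj : T.Adj b u
        · by_cases he : s(b, u) = s(a, b)
          · rcases Sym2.eq_iff.mp he with ⟨h1, h2⟩ | ⟨h1, h2⟩
            · exact absurd (h1 ▸ hbF) haF
            · exact absurd h2 hua
          · exfalso
            have hG'adj : G'.Adj b u := by
              rw [hG'd, SimpleGraph.deleteEdges_adj]
              exact ⟨hadj, by simpa using he⟩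
            have : u ∈ Fs := by
              simp only [hFs, Finset.mem_filter, Finset.mem_univ, true_and]
              exact hG'adj.reachable
            exact (Finset.mem_compl.mp hu) this
        · rw [show w b u = 0 from treeWeight_of_not_adj T v₀ x w₀ hadj]; ring
      · intro h
        exact absurd (Finset.mem_compl.mpr haF) h
    · intro v hv hvb
      apply Finset.sum_eq_zero
      intro u hu
      by_cases hadj : T.Adj v u
      · by_cases he : s(v, u) = s(a, b)
        · rcases Sym2.eq_iff.mp he with ⟨h1, h2⟩ | ⟨h1, h2⟩
          · exact absurd (h1 ▸ hv) haF
          · exact absurd h1 hvb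
        · exfalso
          have hG'adj : G'.Adj v u := by
            rw [hG'd, SimpleGraph.deleteEdges_adj]
            exact ⟨hadj, by simpa using he⟩
          have hvF : G'.Reachable b v := by
            have := Finset.mem_filter.mp hv
            exact this.2
          have : u ∈ Fs := by
            simp only [hFs, Finset.mem_filter, Finset.mem_univ, true_and]
            exact hvF.trans hG'adj.reachable
          exact (Finset.mem_compl.mp hu) this
      · rw [show w v u = 0 from treeWeight_of_not_adj T v₀ x w₀ hadj]; ring
    · intro h
      exact absurd hbF h
  have hFb : 0 < F b := extZ_pos v₀ f hfp (fun h => hv₀F (h ▸ hbF))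
  have hrhs : ν * F b ≤ ν * ∑ v ∈ Fs, F v := by
    apply mul_le_mul_of_nonneg_left _ hν.le
    exact Finset.single_le_sum (fun v _ => extZ_nonneg v₀ f hfp v) hbF
  have heq : w b a * (F b - F a) = ν * ∑ v ∈ Fs, F v := by
    rw [← hsum]
    rw [Finset.sum_congr rfl (fun v _ => hsplit v), Finset.sum_add_distrib, hzero, hcross]
    ring
  have hwba : 0 < w b a := treeWeight_pos T v₀ x hw₀ hab.symm
  nlinarith

lemma path_length_eq_dist {T : SimpleGraph V} (hT : T.IsTree) {u v : V}
    (q : T.Walk u v) (hq : q.IsPath) : q.length = T.dist u v := by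
  obtain ⟨P, hP, hlen⟩ := SimpleGraph.Reachable.exists_path_of_dist ⟨q⟩
  obtain ⟨P0, hP0, huniq⟩ := hT.existsUnique_path u v
  have h1 : q = P0 := huniq q hq
  have h2 : P = P0 := huniq P hP
  rw [h1, ← h2, hlen]

lemma notreach_of_concat_path {T : SimpleGraph V} (hT : T.IsTree) {v₀ y v : V}
    (q' : T.Walk v₀ y) (h : T.Adj y v) (hq : (q'.concat h).IsPath) :
    ¬(T.deleteEdges {s(y,v)}).Reachable v v₀ := by
  intro hr
  obtain ⟨W⟩ := hr.symm
  have hWedges : ∀ e ∈ W.edges, e ∈ T.edgeSet := by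
    intro e he
    have := W.edges_subset_edgeSet he
    rw [SimpleGraph.edgeSet_deleteEdges] at this
    exact this.1
  set Wt := (W.transfer T hWedges).bypass with hWt
  have hWtpath : Wt.IsPath := SimpleGraph.Walk.bypass_isPath _
  have hWtedges : s(y,v) ∉ Wt.edges := by
    intro hmem
    have h2 := SimpleGraph.Walk.edges_bypass_subset _ hmem
    rw [SimpleGraph.Walk.edges_transfer] at h2
    have h3 := W.edges_subset_edgeSet h2
    rw [SimpleGraph.edgeSet_deleteEdges] at h3
    exact h3.2 rfl
  obtain ⟨P0, hP0, huniq⟩ := hT.existsUnique_path v₀ v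
  have h1 := huniq _ hq
  have h2 := huniq _ hWtpath
  have hmem : s(y,v) ∈ (q'.concat h).edges := by
    rw [SimpleGraph.Walk.edges_concat]
    simp
  rw [h1, ← h2] at hmem
  exact hWtedges hmem

lemma concat_path_parts {T : SimpleGraph V} {v₀ y v : V} (q' : T.Walk v₀ y)
    (h : T.Adj y v) (hq : (q'.concat h).IsPath) : q'.IsPath ∧ v ∉ q'.support := by
  have hnodup := hq.support_nodup
  rw [SimpleGraph.Walk.support_concat] at hnodup
  rw [List.nodup_append] at hnodup
  refine ⟨SimpleGraph.Walk.isPath_def _ |>.mpr hnodup.1, ?_⟩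
  intro hv
  exact hnodup.2.2 v hv v (List.mem_singleton_self v) rfl

lemma mono_along (T : SimpleGraph V) (hT : T.IsTree) (v₀ x : V) {w₀ : ℝ} (hw₀ : 1 ≤ w₀)
    (f : ({v₀}ᶜ : Set V) → ℝ) (hfp : ∀ a, 0 < f a) {ν : ℝ} (hν : 0 < ν)
    (hf : dirichletMatrix (treeWeight T v₀ x w₀) ({v₀}ᶜ : Set V) *ᵥ f = ν • f) :
    ∀ (n : ℕ) {v : V} (q : T.Walk v₀ v), q.length = n → q.IsPath →
      ∀ u ∈ q.support, u ≠ v → extZ v₀ f u < extZ v₀ f v := by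
  intro n
  induction n with
  | zero =>
    intro v q hlen hq u hu hne
    exfalso
    have hv : v₀ = v := SimpleGraph.Walk.eq_of_length_eq_zero hlen
    have hl : q.support.length = 1 := by rw [SimpleGraph.Walk.length_support, hlen]
    have hcons := q.support_eq_cons
    have htail : q.support.tail = [] := by
      have h2 := congrArg List.length hcons
      rw [hl] at h2
      simp only [List.length_cons] at h2
      exact List.eq_nil_of_length_eq_zero (by omega)
    rw [htail] at hcons
    rw [hcons] at hu
    simp at hu
    exact hne (hu ▸ hv)
  | succ n ih =>
    intro v q hlen hq u hu hne
    cases q with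
    | nil => simp at hlen
    | @cons _ b _ hadj p =>
      obtain ⟨y, q', h', heq⟩ := SimpleGraph.Walk.exists_cons_eq_concat hadj p
      rw [heq] at hq hu hlen
      rw [SimpleGraph.Walk.length_concat] at hlen
      have hq' := concat_path_parts q' h' hq
      have hkey : extZ v₀ f y < extZ v₀ f v :=
        f_lt_of_cut T hT v₀ x hw₀ f hfp hν hf h' (notreach_of_concat_path hT q' h' hq)
      rw [SimpleGraph.Walk.support_concat, List.mem_append] at hu
      have hu' : u ∈ q'.support := by
        rcases hu with hu | hu
        · exact hu
        · simp at hu; exact absurd hu hne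
      by_cases huy : u = y
      · rw [huy]; exact hkey
      · exact lt_trans (ih q' (by omega) hq'.1 u hu' huy) hkey

lemma mem_takeUntil_of_dist_lt {T : SimpleGraph V} (hT : T.IsTree) {v₀ t vi vj : V}
    (p : T.Walk v₀ t) (hp : p.IsPath) (hvi : vi ∈ p.support) (hvj : vj ∈ p.support)
    (hij : T.dist v₀ vi < T.dist v₀ vj) : vi ∈ (p.takeUntil vj hvj).support := by
  by_contra hnot
  set P := p.takeUntil vj hvj with hP
  have hPpath : P.IsPath := hp.takeUntil hvj
  have hdrop : (p.dropUntil vj hvj).IsPath := hp.dropUntil hvj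
  have hsupp : vi ∈ (p.dropUntil vj hvj).support := by
    have hspec := p.take_spec hvj
    rw [← hspec] at hvi
    rw [SimpleGraph.Walk.mem_support_append_iff] at hvi
    tauto
  set Q := (p.dropUntil vj hvj).takeUntil vi hsupp with hQ
  have hQpath : Q.IsPath := hdrop.takeUntil hsupp
  have hRsup : (P.append Q).support = P.support ++ Q.support.tail :=
    SimpleGraph.Walk.support_append _ _
  have hpnodup : (P.support ++ (p.dropUntil vj hvj).support.tail).Nodup := by
    rw [← SimpleGraph.Walk.support_append, p.take_spec hvj]
    exact hp.support_nodup
  rw [List.nodup_append] at hpnodup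
  have hQtail_sub : ∀ y ∈ Q.support.tail, y ∈ (p.dropUntil vj hvj).support.tail := by
    intro y hy
    have hyQ : y ∈ Q.support := List.mem_of_mem_tail hy
    have hyD : y ∈ (p.dropUntil vj hvj).support :=
      SimpleGraph.Walk.support_takeUntil_subset _ _ hyQ
    have hynej : y ≠ vj := by
      intro h; subst h
      have hnd := hQpath.support_nodup
      rw [Q.support_eq_cons] at hnd
      exact (List.nodup_cons.mp hnd).1 hy
    rw [(p.dropUntil vj hvj).support_eq_cons] at hyD
    rcases List.mem_cons.mp hyD with h | h
    · exact absurd h hynej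
    · exact h
  have hRnodup : (P.support ++ Q.support.tail).Nodup := by
    rw [List.nodup_append]
    refine ⟨hpnodup.1, List.Nodup.sublist (List.tail_sublist _) hQpath.support_nodup, ?_⟩
    intro y hy1 y' hy2 hyy'
    subst hyy'
    exact hpnodup.2.2 y hy1 y (hQtail_sub y hy2) rfl
  have hR : (P.append Q).IsPath := (SimpleGraph.Walk.isPath_def _).mpr (hRsup ▸ hRnodup)
  have h1 : P.length = T.dist v₀ vj := path_length_eq_dist hT P hPpath
  have h2 : (P.append Q).length = T.dist v₀ vi := path_length_eq_dist hT _ hR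
  rw [SimpleGraph.Walk.length_append] at h2
  omega

lemma adj_iff_of_pendant {T : SimpleGraph V} {z vi : V} (hdeg : T.degree z = 1)
    (hzi : T.Adj z vi) : ∀ u, T.Adj z u ↔ u = vi := by
  have hcard : (T.neighborFinset z).card = 1 := hdeg
  obtain ⟨a, ha⟩ := Finset.card_eq_one.mp hcard
  have hvi : vi ∈ T.neighborFinset z := (SimpleGraph.mem_neighborFinset _ _ _).mpr hzi
  rw [ha, Finset.mem_singleton] at hvi
  intro u
  rw [← SimpleGraph.mem_neighborFinset, ha, Finset.mem_singleton, hvi]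

lemma dirichlet_isHermitian (v₀ : V) (w : V → V → ℝ) (hw : ∀ a u, w a u = w u a) :
    (dirichletMatrix w ({v₀}ᶜ : Set V)).IsHermitian := by
  unfold dirichletMatrix wLap
  rw [Matrix.IsHermitian]
  ext i j
  simp only [Matrix.conjTranspose_apply, Matrix.submatrix_apply, Matrix.sub_apply,
    Matrix.diagonal, Matrix.of_apply, star_trivial]
  by_cases h : (j.val : V) = i.val
  · have h' : (i.val : V) = j.val := h.symm
    have hij : i = j := Subtype.ext h'
    rw [hij]
  · rw [if_neg h, if_neg (fun h' => h h'.symm), hw]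

end Aux

/-- perturbation P1: moving a pendant vertex from a trunk vertex
to a trunk vertex of larger height strictly decreases the first Dirichlet
eigenvalue. -/
theorem dirichlet_perturbation_P1 {V : Type*} [Fintype V] [DecidableEq V]
    (T : SimpleGraph V) (hT : T.IsTree) (v₀ x : V) (hx : T.Adj v₀ x)
    (w₀ : ℝ) (hw₀ : 1 ≤ w₀)
    (t : V) (p : T.Walk v₀ t) (hp : p.IsPath)
    (hlongest : ∀ (u : V) (q : T.Walk v₀ u), q.IsPath → q.length ≤ p.length)
    (vi vj : V) (hvi : vi ∈ p.support) (hvj : vj ∈ p.support)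
    (hij : T.dist v₀ vi < T.dist v₀ vj)
    (z : V) (hz₀ : z ≠ v₀) (hzx : z ≠ x) (hzj : z ≠ vj)
    (hzpend : T.degree z = 1) (hzi : T.Adj z vi)
    (hposvec : ∃ f : ({v₀}ᶜ : Set V) → ℝ, (∀ a, 0 < f a) ∧
      (dirichletMatrix (treeWeight T v₀ x w₀) ({v₀}ᶜ : Set V)) *ᵥ f =
        nuRooted T v₀ x w₀ • f) :
    nuRooted (SimpleGraph.fromEdgeSet ((T.edgeSet \ {s(z, vi)}) ∪ {s(z, vj)}))
        v₀ x w₀ < nuRooted T v₀ x w₀ := by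
  classical
  obtain ⟨f, hfp, hf⟩ := hposvec
  set ν := nuRooted T v₀ x w₀ with hnud
  set w := treeWeight T v₀ x w₀ with hwdef
  have hν : 0 < ν := nu_pos T v₀ x hx hw₀ f hfp ν hf
  have hvij : vi ≠ vj := fun h => by rw [h] at hij; exact lt_irrefl _ hij
  have hzvi : z ≠ vi := hzi.ne
  have hznadj : ∀ u, T.Adj z u ↔ u = vi := adj_iff_of_pendant hzpend hzi
  have hznotvj : ¬ T.Adj z vj := fun h => hvij ((hznadj vj).mp h).symm
  have hjne : vj ≠ v₀ := by
    intro h; rw [h] at hij; simp [SimpleGraph.dist_self] at hij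
  have hvijF : extZ v₀ f vi < extZ v₀ f vj := by
    have hmem := mem_takeUntil_of_dist_lt hT p hp hvi hvj hij
    exact mono_along T hT v₀ x hw₀ f hfp hν hf ((p.takeUntil vj hvj).length) _ rfl
      (hp.takeUntil hvj) vi hmem hvij
  -- eigen equation at z
  have hzrow : ∀ u, w z u = if u = vi then 1 else 0 := by
    intro u
    by_cases h : u = vi
    · subst h
      rw [if_pos rfl, hwdef]
      unfold treeWeight
      rw [if_pos hzi, if_neg (by push_neg; exact ⟨fun h => absurd h hz₀, fun h => absurd h hzx⟩)]
    · rw [if_neg h]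
      exact treeWeight_of_not_adj T v₀ x w₀ (fun ha => h ((hznadj u).mp ha))
  have hrowsum : (∑ u, w z u) = 1 := by
    rw [Finset.sum_congr rfl (fun u _ => hzrow u)]
    simp
  have hzeig : (1 - ν) * extZ v₀ f z = extZ v₀ f vi := by
    have heig := eigen_coord v₀ w f ν hf z hz₀
    have hsum2 : ∑ u, w z u * extZ v₀ f u = extZ v₀ f vi := by
      rw [Finset.sum_congr rfl (fun u _ => by rw [hzrow u, ite_mul, one_mul, zero_mul])]
      simp
    rw [hrowsum, hsum2] at heig
    linarith
  have hFz : 0 < extZ v₀ f z := extZ_pos v₀ f hfp hz₀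
  have hFvi : 0 ≤ extZ v₀ f vi := extZ_nonneg v₀ f hfp vi
  have hFvj : 0 < extZ v₀ f vj := extZ_pos v₀ f hfp hjne
  have hν1 : ν ≤ 1 := by nlinarith
  set sv : ℝ := if ν < 1 then extZ v₀ f vj / (1 - ν) else extZ v₀ f vj with hsv
  have hkey : (sv - extZ v₀ f vj)^2 - ν * sv^2
      < (extZ v₀ f z - extZ v₀ f vi)^2 - ν * (extZ v₀ f z)^2 := by
    by_cases hc : ν < 1
    · rw [hsv, if_pos hc]
      have h1ν : 0 < 1 - ν := by linarith
      have hs1 : (1 - ν) * (extZ v₀ f vj / (1 - ν)) = extZ v₀ f vj := by field_simp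
      have hsgt : extZ v₀ f z < extZ v₀ f vj / (1 - ν) := by
        have h2 : (1-ν) * extZ v₀ f z < (1-ν) * (extZ v₀ f vj / (1-ν)) := by
          rw [hs1, hzeig]
          exact hvijF
        exact lt_of_mul_lt_mul_left h2 h1ν.le
      have hsub1 : extZ v₀ f vj / (1-ν) - extZ v₀ f vj
          = ν * (extZ v₀ f vj / (1-ν)) := by linear_combination hs1
      have hsub2 : extZ v₀ f z - extZ v₀ f vi = ν * extZ v₀ f z := by
        linear_combination hzeig
      rw [hsub1, hsub2]
      have hs2 : (extZ v₀ f z)^2 < (extZ v₀ f vj / (1-ν))^2 := by nlinarith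
      nlinarith [mul_pos hν h1ν]
    · have hν1' : ν = 1 := le_antisymm hν1 (not_lt.mp hc)
      have hvi0 : extZ v₀ f vi = 0 := by rw [hν1'] at hzeig; linarith
      rw [hsv, if_neg hc, hν1', hvi0]
      nlinarith [pow_pos hFvj 2]
  -- the new graph
  set T' := SimpleGraph.fromEdgeSet ((T.edgeSet \ {s(z, vi)}) ∪ {s(z, vj)}) with hT'd
  set w' := treeWeight T' v₀ x w₀ with hw'def
  have hadj' : ∀ a u, T'.Adj a u ↔ ((T.Adj a u ∧ s(a,u) ≠ s(z,vi)) ∨ s(a,u) = s(z,vj)) := by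
    intro a u
    rw [hT'd, SimpleGraph.fromEdgeSet_adj]
    rw [Set.mem_union, Set.mem_diff, Set.mem_singleton_iff, Set.mem_singleton_iff,
      SimpleGraph.mem_edgeSet]
    constructor
    · rintro ⟨hmem, hne⟩
      exact hmem
    · rintro (⟨hA, hne⟩ | hE)
      · exact ⟨Or.inl ⟨hA, hne⟩, hA.ne⟩
      · refine ⟨Or.inr hE, ?_⟩
        rcases Sym2.eq_iff.mp hE with ⟨h1, h2⟩ | ⟨h1, h2⟩
        · rw [h1, h2]; exact hzj
        · rw [h1, h2]; exact Ne.symm hzj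
  set G : V → ℝ := fun v => if v = z then sv else extZ v₀ f v with hGdef
  set g : ({v₀}ᶜ : Set V) → ℝ := fun a => if (a : V) = z then sv else f a with hgdef
  have hGz : G z = sv := by rw [hGdef]; simp
  have hGother : ∀ v, v ≠ z → G v = extZ v₀ f v := by
    intro v hv; rw [hGdef]; simp [hv]
  have hGg : extZ v₀ g = G := by
    funext v
    by_cases hv : v = v₀
    · rw [hv, extZ_root, hGother v₀ (Ne.symm hz₀), extZ_root]
    · have hvmem : v ∈ ({v₀}ᶜ : Set V) := by simp [hv]
      have h1 : extZ v₀ g v = g ⟨v, hvmem⟩ := extZ_apply v₀ g ⟨v, hvmem⟩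
      rw [h1, hgdef, hGdef]
      simp only []
      by_cases hvz : v = z
      · rw [if_pos hvz, if_pos hvz]
      · rw [if_neg hvz, if_neg hvz]
        exact (extZ_apply v₀ f ⟨v, hvmem⟩).symm
  -- pointwise identity
  have hpt : ∀ a u, w' a u * (G a - G u)^2 = w a u * (extZ v₀ f a - extZ v₀ f u)^2
      + (if (a=z∧u=vj)∨(a=vj∧u=z) then (sv - extZ v₀ f vj)^2 else 0)
      - (if (a=z∧u=vi)∨(a=vi∧u=z) then (extZ v₀ f z - extZ v₀ f vi)^2 else 0) := by
    intro a u
    by_cases h1 : (a=z∧u=vj)∨(a=vj∧u=z)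
    · rw [if_pos h1]
      have hif2 : ¬((a=z∧u=vi)∨(a=vi∧u=z)) := by
        rcases h1 with ⟨ha,hu⟩|⟨ha,hu⟩ <;> subst ha <;> subst hu
        · rintro (⟨_,h4⟩|⟨h3,_⟩)
          · exact hvij h4.symm
          · exact hzvi h3
        · rintro (⟨h3,h4⟩|⟨h3,_⟩)
          · exact hzvi h4
          · exact hvij h3.symm
      rw [if_neg hif2]
      have hT'adj : T'.Adj a u := by
        apply (hadj' a u).mpr
        right
        rcases h1 with ⟨ha,hu⟩|⟨ha,hu⟩
        · rw [ha, hu]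
        · rw [ha, hu]; exact Sym2.eq_swap
      have hw'1 : w' a u = 1 := by
        rw [hw'def]
        unfold treeWeight
        rw [if_pos hT'adj, if_neg ?hbdry]
        case hbdry =>
          rcases h1 with ⟨ha,hu⟩|⟨ha,hu⟩ <;> rw [ha, hu] <;>
            rintro (⟨hA,hB⟩|⟨hA,hB⟩)
          · exact hz₀ hA
          · exact hzx hA
          · exact hzx hB
          · exact hz₀ hB
      have hw0 : w a u = 0 := by
        rw [hwdef]
        apply treeWeight_of_not_adj
        rcases h1 with ⟨ha,hu⟩|⟨ha,hu⟩ <;> rw [ha, hu]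
        · exact hznotvj
        · exact fun h => hznotvj h.symm
      have hGG : (G a - G u)^2 = (sv - extZ v₀ f vj)^2 := by
        rcases h1 with ⟨ha,hu⟩|⟨ha,hu⟩ <;> rw [ha, hu]
        · rw [hGz, hGother vj (Ne.symm hzj)]
        · rw [hGz, hGother vj (Ne.symm hzj)]; ring
      rw [hw'1, hw0, hGG]
      ring
    · rw [if_neg h1]
      by_cases h2 : (a=z∧u=vi)∨(a=vi∧u=z)
      · rw [if_pos h2]
        have hnT' : ¬ T'.Adj a u := by
          intro hadj
          rcases (hadj' a u).mp hadj with ⟨_, hne⟩ | hE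
          · apply hne
            rcases h2 with ⟨ha,hu⟩|⟨ha,hu⟩
            · rw [ha, hu]
            · rw [ha, hu]; exact Sym2.eq_swap
          · have hE' : s(z,vi) = s(z,vj) ∨ s(vi,z) = s(z,vj) := by
              rcases h2 with ⟨ha,hu⟩|⟨ha,hu⟩ <;> rw [ha, hu] at hE
              · exact Or.inl hE
              · exact Or.inr hE
            rcases hE' with hE' | hE'
            · rcases Sym2.eq_iff.mp hE' with ⟨_, h4⟩ | ⟨h3, _⟩
              · exact hvij h4
              · exact hzj h3
            · rcases Sym2.eq_iff.mp hE' with ⟨h3, h4⟩ | ⟨h3, h4⟩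
              · exact hzj h4
              · exact hvij h3
        have hw'0 : w' a u = 0 := by
          rw [hw'def]; exact treeWeight_of_not_adj T' v₀ x w₀ hnT'
        have hw1 : w a u = 1 := by
          rw [hwdef]
          unfold treeWeight
          have hA : T.Adj a u := by
            rcases h2 with ⟨ha,hu⟩|⟨ha,hu⟩ <;> rw [ha, hu]
            · exact hzi
            · exact hzi.symm
          rw [if_pos hA, if_neg ?hbdry2]
          case hbdry2 =>
            rcases h2 with ⟨ha,hu⟩|⟨ha,hu⟩ <;> rw [ha, hu] <;>
              rintro (⟨hA,hB⟩|⟨hA,hB⟩)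
            · exact hz₀ hA
            · exact hzx hA
            · exact hzx hB
            · exact hz₀ hB
        have hFF : (extZ v₀ f a - extZ v₀ f u)^2 = (extZ v₀ f z - extZ v₀ f vi)^2 := by
          rcases h2 with ⟨ha,hu⟩|⟨ha,hu⟩ <;> rw [ha, hu]
          ring
        rw [hw'0, hw1, hFF]
        ring
      · rw [if_neg h2]
        by_cases hza : a = z
        · have huj : u ≠ vj := fun h => h1 (Or.inl ⟨hza, h⟩)
          have hui : u ≠ vi := fun h => h2 (Or.inl ⟨hza, h⟩)
          have hw'0 : w' a u = 0 := by
            rw [hw'def]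
            apply treeWeight_of_not_adj
            intro hadj
            rcases (hadj' a u).mp hadj with ⟨hA, _⟩ | hE
            · rw [hza] at hA
              exact hui ((hznadj u).mp hA)
            · rw [hza] at hE
              rcases Sym2.eq_iff.mp hE with ⟨_, h4⟩ | ⟨h3, _⟩
              · exact huj h4
              · exact hzj h3
          have hw0 : w a u = 0 := by
            rw [hwdef]
            apply treeWeight_of_not_adj
            intro hA
            rw [hza] at hA
            exact hui ((hznadj u).mp hA)
          rw [hw'0, hw0]
          ring
        · by_cases hzu : u = z
          · have haj : a ≠ vj := fun h => h1 (Or.inr ⟨h, hzu⟩)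
            have hai : a ≠ vi := fun h => h2 (Or.inr ⟨h, hzu⟩)
            have hw'0 : w' a u = 0 := by
              rw [hw'def]
              apply treeWeight_of_not_adj
              intro hadj
              rcases (hadj' a u).mp hadj with ⟨hA, _⟩ | hE
              · rw [hzu] at hA
                exact hai ((hznadj a).mp hA.symm)
              · rw [hzu] at hE
                rcases Sym2.eq_iff.mp hE with ⟨h3, _⟩ | ⟨h3, _⟩
                · exact hza h3
                · exact haj h3
            have hw0 : w a u = 0 := by
              rw [hwdef]
              apply treeWeight_of_not_adj
              intro hA
              rw [hzu] at hA
              exact hai ((hznadj a).mp hA.symm)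
            rw [hw'0, hw0]
            ring
          · have hGa : G a = extZ v₀ f a := hGother a hza
            have hGu : G u = extZ v₀ f u := hGother u hzu
            have hww : w' a u = w a u := by
              have hiff : T'.Adj a u ↔ T.Adj a u := by
                constructor
                · intro h
                  rcases (hadj' a u).mp h with ⟨hA, _⟩ | hE
                  · exact hA
                  · exfalso
                    rcases Sym2.eq_iff.mp hE with ⟨h3, _⟩ | ⟨_, h4⟩
                    · exact hza h3
                    · exact hzu h4
                · intro h
                  apply (hadj' a u).mpr
                  left
                  refine ⟨h, ?_⟩
                  intro hE
                  rcases Sym2.eq_iff.mp hE with ⟨h3, _⟩ | ⟨_, h4⟩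
                  · exact hza h3
                  · exact hzu h4
              rw [hw'def, hwdef]
              unfold treeWeight
              by_cases hA : T.Adj a u
              · rw [if_pos (hiff.mpr hA), if_pos hA]
              · rw [if_neg (fun h => hA (hiff.mp h)), if_neg hA]
            rw [hGa, hGu, hww]
            ring
  -- sum the pointwise identity
  have hindic : ∀ (c : ℝ) (b1 b2 : V), b1 ≠ b2 →
      (∑ a : V, ∑ u : V, (if (a=b1∧u=b2)∨(a=b2∧u=b1) then c else 0)) = 2*c := by
    intro c b1 b2 hne
    have hsplit : ∀ a u : V, (if (a=b1∧u=b2)∨(a=b2∧u=b1) then c else 0)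
        = (if a=b1 then (if u=b2 then c else 0) else 0)
          + (if a=b2 then (if u=b1 then c else 0) else 0) := by
      intro a u
      by_cases ha1 : a = b1 <;> by_cases ha2 : a = b2 <;>
        by_cases hu1 : u = b1 <;> by_cases hu2 : u = b2 <;>
        first
        | (exfalso; exact hne (ha1 ▸ ha2 ▸ rfl))
        | (exfalso; exact hne (hu2 ▸ hu1 ▸ rfl))
        | simp [ha1, ha2, hu1, hu2, hne, hne.symm]
    rw [Finset.sum_congr rfl (fun a _ => Finset.sum_congr rfl (fun u _ => hsplit a u))]
    simp only [Finset.sum_add_distrib]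
    simp [Finset.sum_ite_eq']
    ring
  have hRdiff : (∑ a : V, ∑ u : V, w' a u * (G a - G u)^2)
      = (∑ a : V, ∑ u : V, w a u * (extZ v₀ f a - extZ v₀ f u)^2)
        - 2*(extZ v₀ f z - extZ v₀ f vi)^2 + 2*(sv - extZ v₀ f vj)^2 := by
    rw [Finset.sum_congr rfl (fun a _ => Finset.sum_congr rfl (fun u _ => hpt a u))]
    simp only [Finset.sum_sub_distrib, Finset.sum_add_distrib]
    rw [hindic _ z vj hzj, hindic _ z vi hzvi]
    ring
  -- norms
  have hnorm : g ⬝ᵥ g = f ⬝ᵥ f - (extZ v₀ f z)^2 + sv^2 := by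
    rw [dot_self_ext v₀ g, dot_self_ext v₀ f, hGg]
    have hptn : ∀ a : V, (G a)^2 = (extZ v₀ f a)^2
        + (if a = z then sv^2 - (extZ v₀ f z)^2 else 0) := by
      intro a
      by_cases h : a = z
      · subst h; rw [hGz, if_pos rfl]; ring
      · rw [hGother a h, if_neg h]; ring
    rw [Finset.sum_congr rfl (fun a _ => hptn a), Finset.sum_add_distrib]
    simp [Finset.sum_ite_eq']
    ring
  -- quadratic forms
  have hQF' : 2 * (g ⬝ᵥ (dirichletMatrix w' ({v₀}ᶜ : Set V) *ᵥ g))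
      = ∑ a : V, ∑ u : V, w' a u * (G a - G u)^2 := by
    rw [dirichlet_dot v₀ w' g, hGg]
    exact symm_double w' (by rw [hw'def]; exact treeWeight_symm T' v₀ x w₀) G
  have hQF : 2 * (f ⬝ᵥ (dirichletMatrix w ({v₀}ᶜ : Set V) *ᵥ f))
      = ∑ a : V, ∑ u : V, w a u * (extZ v₀ f a - extZ v₀ f u)^2 := by
    rw [dirichlet_dot v₀ w f]
    exact symm_double w (by rw [hwdef]; exact treeWeight_symm T v₀ x w₀) (extZ v₀ f)
  have hQTF : f ⬝ᵥ (dirichletMatrix w ({v₀}ᶜ : Set V) *ᵥ f) = ν * (f ⬝ᵥ f) := by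
    rw [hf]
    simp [dotProduct_smul, smul_eq_mul]
  have hquad : g ⬝ᵥ (dirichletMatrix w' ({v₀}ᶜ : Set V) *ᵥ g) < ν * (g ⬝ᵥ g) := by
    rw [hnorm]
    nlinarith [hQF', hQF, hQTF, hRdiff, hkey]
  have hH : (dirichletMatrix w' ({v₀}ᶜ : Set V)).IsHermitian :=
    dirichlet_isHermitian v₀ w' (by rw [hw'def]; exact treeWeight_symm T' v₀ x w₀)
  have hfin := minEig_lt_of_rayleigh hH g ν hquad
  exact hfin
end
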